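/- Let m, j be integers with m ≥ 4, m even, and 1 ≤ j < m/2. If the generalized Pappus graph P(m, j, m/2) admits a neighborhood 3-balanced coloring, then 3 divides m. -/
import Mathlib

/-- A coloring `ℓ : V → ZMod 3` of a simple graph `G` is neighborhood 3-balanced if
every vertex has an equal number of neighbors of each of the three colors. -/
def NBalanced {V : Type*} (G : SimpleGraph V) (ℓ : V → ZMod 3) : Prop :=
  ∀ v : V, ∀ i j : ZMod 3,
    {w | G.Adj v w ∧ ℓ w = i}.ncard = {w | G.Adj v w ∧ ℓ w = j}.ncard

/-- The generalized Pappus graph `P(m, j, k)`.  Vertices: `Sum.inl x` are the exterior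
vertices `v_x`, `Sum.inr (Sum.inl x)` the middle vertices `u_x`, and
`Sum.inr (Sum.inr x)` the interior vertices `w_x`, for `x : ZMod m`.
Edges: `v_i v_{i+1}`, `v_i u_i`, `u_i w_{i+j}`, `u_i w_{i-j}`, and `w_i w_{i+k}`. -/
def genPappus (m j k : ℕ) : SimpleGraph (ZMod m ⊕ ZMod m ⊕ ZMod m) :=
  SimpleGraph.fromRel (fun a b =>
    match a, b with
    | Sum.inl x, Sum.inl y => y = x + 1
    | Sum.inl x, Sum.inr (Sum.inl y) => y = x
    | Sum.inr (Sum.inl x), Sum.inr (Sum.inr y) =>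
        y = x + (j : ZMod m) ∨ y = x - (j : ZMod m)
    | Sum.inr (Sum.inr x), Sum.inr (Sum.inr y) => y = x + (k : ZMod m)
    | _, _ => False)

lemma exists_third_color : ∀ a b : ZMod 3, ∃ i : ZMod 3, i ≠ a ∧ i ≠ b := by decide

lemma sum_three_distinct : ∀ x y z : ZMod 3, x ≠ y → y ≠ z → x ≠ z → x + y + z = 0 := by
  decide

lemma key3 : ∀ u v w : ZMod 3, u ≠ 0 ∧ v ≠ 0 ∧ w ≠ 0 ∧ w = -(u + v) → u = v ∧ w = u := by
  decide

/-- In a neighborhood 3-balanced coloring, if the neighborhood of `v` is exactly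
`{p, q, r}` with `p ≠ q`, then `p` and `q` receive different colors. -/
lemma nbhd_ne {V : Type*} (G : SimpleGraph V) (ℓ : V → ZMod 3) (hb : NBalanced G ℓ)
    (v p q r : V) (hpq : p ≠ q)
    (hadj : ∀ w, G.Adj v w ↔ (w = p ∨ w = q ∨ w = r)) : ℓ p ≠ ℓ q := by
  intro hcol
  obtain ⟨i, hip, hir⟩ := exists_third_color (ℓ p) (ℓ r)
  have h := hb v (ℓ p) i
  have hsub : {w | G.Adj v w ∧ ℓ w = ℓ p} ⊆ ({p, q, r} : Set V) := by
    intro w hw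
    rcases (hadj w).1 hw.1 with rfl | rfl | rfl <;> simp
  have hfin : {w | G.Adj v w ∧ ℓ w = ℓ p}.Finite :=
    (((Set.finite_singleton r).insert q).insert p).subset hsub
  have h2 : ({p, q} : Set V) ⊆ {w | G.Adj v w ∧ ℓ w = ℓ p} := by
    intro w hw
    simp only [Set.mem_insert_iff, Set.mem_singleton_iff] at hw
    rcases hw with rfl | rfl
    · exact ⟨(hadj _).2 (Or.inl rfl), rfl⟩
    · exact ⟨(hadj _).2 (Or.inr (Or.inl rfl)), hcol.symm⟩
  have h3 : {w | G.Adj v w ∧ ℓ w = i} = ∅ := by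
    refine Set.eq_empty_iff_forall_notMem.2 fun w hw => ?_
    simp only [Set.mem_setOf_eq] at hw
    obtain ⟨haw, hcw⟩ := hw
    rcases (hadj w).1 haw with rfl | rfl | rfl
    · exact hip hcw.symm
    · rw [← hcol] at hcw; exact hip hcw.symm
    · exact hir hcw.symm
  have h4 : 2 ≤ {w | G.Adj v w ∧ ℓ w = ℓ p}.ncard := by
    have := Set.ncard_le_ncard h2 hfin
    rwa [Set.ncard_pair hpq] at this
  rw [h, h3, Set.ncard_empty] at h4
  omega

theorem stmt8 (m j : ℕ) (hm : 4 ≤ m) (hme : Even m) (hj1 : 1 ≤ j) (hj2 : 2 * j < m)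
    (h : ∃ ℓ, NBalanced (genPappus m j (m / 2)) ℓ) : 3 ∣ m := by
  obtain ⟨ℓ, hb⟩ := h
  obtain ⟨r, hr⟩ := hme
  haveI : NeZero m := ⟨by omega⟩
  set G := genPappus m j (m / 2) with hG
  -- basic cast facts
  have hT : (j : ZMod m) + j ≠ 0 := by
    intro hc
    have h2 : ((2 * j : ℕ) : ZMod m) = 0 := by push_cast; linear_combination hc
    rw [ZMod.natCast_eq_zero_iff] at h2
    have := Nat.le_of_dvd (by omega) h2
    omega
  have hK : ((m / 2 : ℕ) : ZMod m) ≠ 0 := by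
    intro hc
    rw [ZMod.natCast_eq_zero_iff] at hc
    have := Nat.le_of_dvd (by omega) hc
    omega
  have hKK : ((m / 2 : ℕ) : ZMod m) + ((m / 2 : ℕ) : ZMod m) = 0 := by
    have e : ((m / 2 : ℕ) : ZMod m) + ((m / 2 : ℕ) : ZMod m)
        = ((m / 2 + m / 2 : ℕ) : ZMod m) := by push_cast; ring
    rw [e, show m / 2 + m / 2 = m by omega, ZMod.natCast_self]
  -- adjacency characterizations
  have hadj_u : ∀ x : ZMod m, ∀ w', G.Adj (Sum.inr (Sum.inl x)) w' ↔
      (w' = Sum.inl x ∨ w' = Sum.inr (Sum.inr (x + (j : ZMod m))) ∨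
        w' = Sum.inr (Sum.inr (x - (j : ZMod m)))) := by
    intro x w'
    rcases w' with y | y | y <;>
      simp [hG, genPappus, SimpleGraph.fromRel_adj, eq_comm]
  have hadj_w : ∀ x : ZMod m, ∀ w', G.Adj (Sum.inr (Sum.inr x)) w' ↔
      (w' = Sum.inr (Sum.inl (x - (j : ZMod m))) ∨ w' = Sum.inr (Sum.inl (x + (j : ZMod m))) ∨
        w' = Sum.inr (Sum.inr (x + ((m / 2 : ℕ) : ZMod m)))) := by
    intro x w'
    rcases w' with y | y | y <;>
      simp only [hG, genPappus, SimpleGraph.fromRel_adj, Sum.inr.injEq, Sum.inl.injEq,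
        reduceCtorEq, false_or, or_false, ne_eq, not_false_iff, true_and, false_iff,
        not_or, false_and, and_false, iff_false]
    · constructor
      · rintro (h | h) <;> subst h
        · left; ring
        · right; ring
      · rintro (h | h) <;> subst h
        · left; ring
        · right; ring
    · constructor
      · rintro ⟨hne, (h | h)⟩
        · exact h
        · subst h; linear_combination -hKK
      · rintro h; subst h
        exact ⟨fun hc => hK (by linear_combination -hc), Or.inl rfl⟩
  -- colors
  set a : ZMod m → ZMod 3 := fun x => ℓ (Sum.inl x) with ha
  set b : ZMod m → ZMod 3 := fun x => ℓ (Sum.inr (Sum.inl x)) with hbdef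
  set c : ZMod m → ZMod 3 := fun x => ℓ (Sum.inr (Sum.inr x)) with hc
  set J : ZMod m := (j : ZMod m) with hJ
  set K : ZMod m := ((m / 2 : ℕ) : ZMod m) with hKdef
  -- distinctness of neighbor indices
  have hwne : ∀ x : ZMod m, x + J ≠ x - J := by
    intro x hx
    exact hT (by linear_combination hx)
  -- facts at u-vertices
  have hu_ne : ∀ x : ZMod m, c (x + J) ≠ c (x - J) := by
    intro x
    refine nbhd_ne G ℓ hb (Sum.inr (Sum.inl x)) (Sum.inr (Sum.inr (x + J)))
      (Sum.inr (Sum.inr (x - J))) (Sum.inl x)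
      (fun hx => hwne x ?_) (fun w' => by rw [hadj_u x w']; try tauto)
    exact Sum.inr.inj (Sum.inr.inj hx)
  have hu_sum : ∀ x : ZMod m, a x + c (x + J) + c (x - J) = 0 := by
    intro x
    have h1 := hu_ne x
    have h2 : a x ≠ c (x + J) :=
      nbhd_ne G ℓ hb (Sum.inr (Sum.inl x)) (Sum.inl x) (Sum.inr (Sum.inr (x + J)))
        (Sum.inr (Sum.inr (x - J)))
        (by simp) (fun w' => by rw [hadj_u x w']; try tauto)
    have h3 : a x ≠ c (x - J) :=
      nbhd_ne G ℓ hb (Sum.inr (Sum.inl x)) (Sum.inl x) (Sum.inr (Sum.inr (x - J)))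
        (Sum.inr (Sum.inr (x + J)))
        (by simp) (fun w' => by rw [hadj_u x w']; try tauto)
    exact sum_three_distinct _ _ _ h2 h1 h3
  -- facts at w-vertices
  have hw_ne : ∀ x : ZMod m, b (x - J) ≠ b (x + J) := by
    intro x
    refine nbhd_ne G ℓ hb (Sum.inr (Sum.inr x)) (Sum.inr (Sum.inl (x - J)))
      (Sum.inr (Sum.inl (x + J))) (Sum.inr (Sum.inr (x + K)))
      (fun hx => ?_) (fun w' => by rw [hadj_w x w']; try tauto)
    have h5 := Sum.inl.inj (Sum.inr.inj hx)
    exact hwne x (by rw [h5])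
  have hw_sum : ∀ x : ZMod m, b (x - J) + b (x + J) + c (x + K) = 0 := by
    intro x
    have h1 := hw_ne x
    have h2 : b (x - J) ≠ c (x + K) :=
      nbhd_ne G ℓ hb (Sum.inr (Sum.inr x)) (Sum.inr (Sum.inl (x - J)))
        (Sum.inr (Sum.inr (x + K))) (Sum.inr (Sum.inl (x + J)))
        (by simp) (fun w' => by rw [hadj_w x w']; try tauto)
    have h3 : b (x + J) ≠ c (x + K) :=
      nbhd_ne G ℓ hb (Sum.inr (Sum.inr x)) (Sum.inr (Sum.inl (x + J)))
        (Sum.inr (Sum.inr (x + K))) (Sum.inr (Sum.inl (x - J)))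
        (by simp) (fun w' => by rw [hadj_w x w']; try tauto)
    exact sum_three_distinct _ _ _ h1 h3 h2
  -- the difference function
  set f : ZMod m → ZMod 3 := fun x => b (x + (J + J)) - b x with hf
  have hfne : ∀ x : ZMod m, f x ≠ 0 := by
    intro x hx
    have h1 := hw_ne (x + J)
    rw [show x + J - J = x by ring, show x + J + J = x + (J + J) by ring] at h1
    simp only [hf] at hx
    exact h1 (sub_eq_zero.1 hx).symm
  -- c in terms of b
  have hcb : ∀ x : ZMod m, c x = -(b (x - K - J) + b (x - K + J)) := by
    intro x
    have h6 := hw_sum (x - K)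
    rw [show x - K + K = x by ring] at h6
    linear_combination h6
  -- g = c-difference: nonvanishing
  have hgne : ∀ x : ZMod m, c (x + (J + J)) - c x ≠ 0 := by
    intro x hx
    have h1 := hu_ne (x + J)
    rw [show x + J - J = x by ring, show x + J + J = x + (J + J) by ring] at h1
    exact h1 (sub_eq_zero.1 hx)
  have hgf : ∀ x : ZMod m, f (x - K - J) = f (x - K + J) ∧
      c (x + (J + J)) - c x = f (x - K - J) := by
    intro x
    refine key3 _ _ _ ⟨hfne _, hfne _, hgne x, ?_⟩
    have e1 := hcb (x + (J + J))
    have e2 := hcb x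
    rw [show x + (J + J) - K - J = (x - K - J) + (J + J) by ring,
      show x + (J + J) - K + J = (x - K + J) + (J + J) by ring] at e1
    simp only [hf]
    linear_combination e1 - e2
  have hfper : ∀ y : ZMod m, f (y + (J + J)) = f y := by
    intro y
    have h7 := (hgf (y + K + J)).1
    rw [show y + K + J - K - J = y by ring,
      show y + K + J - K + J = y + (J + J) by ring] at h7
    exact h7.symm
  -- a in terms of c, and the step relation
  have hac : ∀ x : ZMod m, a x = -(c (x + J) + c (x - J)) := by
    intro x
    linear_combination hu_sum x
  have hstep : ∀ x : ZMod m, a (x + (J + J)) = a x + f (x - K) := by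
    intro x
    have e1 := hac (x + (J + J))
    have e2 := hac x
    have g1 := (hgf (x + J)).2
    have g2 := (hgf (x - J)).2
    rw [show x + J - K - J = x - K by ring] at g1
    rw [show x - J - K - J = x - K - (J + J) by ring] at g2
    have g2' : c (x - J + (J + J)) - c (x - J) = f (x - K) := by
      rw [g2, ← hfper (x - K - (J + J)), show x - K - (J + J) + (J + J) = x - K by ring]
    rw [show x + (J + J) + J = x + J + (J + J) by ring,
      show x + (J + J) - J = x - J + (J + J) by ring] at e1
    have h3f : (3 : ZMod 3) * f (x - K) = 0 := by
      rw [show (3 : ZMod 3) = 0 by decide, zero_mul]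
    linear_combination e1 - e2 - g1 - g2' - h3f
  -- iterate
  have hfper' : ∀ (t : ℕ) (y : ZMod m), f (y + (t : ZMod m) * (J + J)) = f y := by
    intro t
    induction t with
    | zero => intro y; simp
    | succ n ih =>
      intro y
      have e : y + ((n + 1 : ℕ) : ZMod m) * (J + J) = (y + (n : ZMod m) * (J + J)) + (J + J) := by
        push_cast; ring
      rw [e, hfper, ih]
  have hiter : ∀ (t : ℕ) (x : ZMod m),
      a (x + (t : ZMod m) * (J + J)) = a x + (t : ZMod 3) * f (x - K) := by
    intro t
    induction t with
    | zero => intro x; simp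
    | succ n ih =>
      intro x
      have e : x + ((n + 1 : ℕ) : ZMod m) * (J + J) = (x + (n : ZMod m) * (J + J)) + (J + J) := by
        push_cast; ring
      rw [e, hstep, ih]
      have e2 : f (x + (n : ZMod m) * (J + J) - K) = f (x - K) := by
        rw [show x + (n : ZMod m) * (J + J) - K = (x - K) + (n : ZMod m) * (J + J) by ring,
          hfper']
      rw [e2]
      push_cast
      ring
  have hfinal := hiter m 0
  rw [ZMod.natCast_self, zero_mul, add_zero, left_eq_add] at hfinal
  have hm3 : (m : ZMod 3) = 0 := by
    rcases mul_eq_zero.1 hfinal with h9 | h9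
    · exact h9
    · exact absurd h9 (hfne _)
  exact (ZMod.natCast_eq_zero_iff m 3).1 hm3
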